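/- Let f : ℝⁿ → ℝⁿ be continuously differentiable with Jacobian Df(x), let ε > 0, and let P be a real symmetric n×n matrix such that Df(x)ᵀP + P·Df(x) ⪯ −εI for all x ∈ ℝⁿ (strict dominance with rate λ = 0). Then f is injective: f(x) = f(y) implies x = y. -/

import Mathlib

open Matrix

/-- `M ⪯ N` iff `N - M` is positive semidefinite. -/
def matLE {m : Type*} [Fintype m] (M N : Matrix m m ℝ) : Prop := (N - M).PosSemidef

/-- A real symmetric matrix has inertia `p`: exactly `p` negative eigenvalues,
`card m − p` positive eigenvalues, and no zero eigenvalues, counted with multiplicity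
(as roots of the characteristic polynomial). -/
def hasInertia {m : Type*} [Fintype m] [DecidableEq m]
    (P : Matrix m m ℝ) (p : ℕ) : Prop :=
  Multiset.countP (fun μ : ℝ => μ < 0) P.charpoly.roots = p ∧
  Multiset.countP (fun μ : ℝ => 0 < μ) P.charpoly.roots = Fintype.card m - p ∧
  (0 : ℝ) ∉ P.charpoly.roots

/-- Number of complex eigenvalues (with algebraic multiplicity) of a real matrix
with strictly positive real part. -/
noncomputable def posReCount {m : Type*} [Fintype m] [DecidableEq m]
    (A : Matrix m m ℝ) : ℕ :=
  Multiset.countP (fun μ : ℂ => 0 < μ.re) (A.map Complex.ofReal).charpoly.roots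

/-- Number of complex eigenvalues (with algebraic multiplicity) of a real matrix
with strictly negative real part. -/
noncomputable def negReCount {m : Type*} [Fintype m] [DecidableEq m]
    (A : Matrix m m ℝ) : ℕ :=
  Multiset.countP (fun μ : ℂ => μ.re < 0) (A.map Complex.ofReal).charpoly.roots

/-- The quadratic form `xᵀ P x`. -/
def quadForm {m : Type*} [Fintype m] (P : Matrix m m ℝ) (x : m → ℝ) : ℝ :=
  x ⬝ᵥ P.mulVec x

/-- Euclidean norm on `m → ℝ`. -/
noncomputable def enorm {m : Type*} [Fintype m] (x : m → ℝ) : ℝ :=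
  Real.sqrt (x ⬝ᵥ x)

/-- `J` is the Jacobian of `f`. -/
def IsJacobianOf {n : ℕ} (J : (Fin n → ℝ) → Matrix (Fin n) (Fin n) ℝ)
    (f : (Fin n → ℝ) → (Fin n → ℝ)) : Prop :=
  ∀ x, HasFDerivAt f (LinearMap.toContinuousLinearMap ((J x).mulVecLin)) x

/-- strict dominance with rate λ = 0 implies injectivity of f. -/
theorem strict_zero_dominance_implies_injective {n : ℕ}
    (f : (Fin n → ℝ) → (Fin n → ℝ)) (J : (Fin n → ℝ) → Matrix (Fin n) (Fin n) ℝ)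
    (hf : ContDiff ℝ 1 f) (hJ : IsJacobianOf J f)
    (P : Matrix (Fin n) (Fin n) ℝ) (hPsymm : P.IsSymm)
    (eps : ℝ) (heps : 0 < eps)
    (hLMI : ∀ x : Fin n → ℝ, matLE ((J x)ᵀ * P + P * J x)
      (-(eps • (1 : Matrix (Fin n) (Fin n) ℝ)))) :
    Function.Injective f := by
  intro x y hxy
  by_contra hne
  set v := x - y with hvdef
  have hv0 : v ≠ 0 := sub_ne_zero.mpr hne
  have hvv : 0 < v ⬝ᵥ v := by
    have hnn : 0 ≤ v ⬝ᵥ v := Finset.sum_nonneg fun i _ => mul_self_nonneg _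
    rcases lt_or_eq_of_le hnn with h | h
    · exact h
    · exact absurd (dotProduct_self_eq_zero.mp h.symm) hv0
  -- the linear functional w ↦ v ⬝ᵥ P.mulVec w
  let ℓ : (Fin n → ℝ) →ₗ[ℝ] ℝ :=
    { toFun := fun w => v ⬝ᵥ P.mulVec w
      map_add' := by intro a b; simp [Matrix.mulVec_add, dotProduct_add]
      map_smul' := by intro c a; simp [Matrix.mulVec_smul, dotProduct_smul] }
  let g : ℝ → ℝ := fun t => v ⬝ᵥ P.mulVec (f (y + t • v))
  -- g has derivative v ⬝ᵥ P (J _ v)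
  have hg : ∀ t : ℝ, HasDerivAt g (v ⬝ᵥ P.mulVec ((J (y + t • v)).mulVec v)) t := by
    intro t
    have hγ : HasDerivAt (fun t : ℝ => y + t • v) v t := by
      simpa using ((hasDerivAt_id t).smul_const v).const_add y
    have hfγ := (hJ (y + t • v)).comp_hasDerivAt t hγ
    have := (ℓ.toContinuousLinearMap.hasFDerivAt.comp_hasDerivAt t hfγ)
    exact this
  -- derivative bound
  have hbound : ∀ t : ℝ, v ⬝ᵥ P.mulVec ((J (y + t • v)).mulVec v) < 0 := by
    intro t
    set A := J (y + t • v) with hA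
    have h1 := (hLMI (y + t • v)).dotProduct_mulVec_nonneg v
    have h2 : v ⬝ᵥ ((Aᵀ * P + P * A).mulVec v) ≤ -(eps * (v ⬝ᵥ v)) := by
      have := h1
      simp only [Matrix.sub_mulVec, Matrix.neg_mulVec, Matrix.smul_mulVec,
        Matrix.one_mulVec, dotProduct_sub, dotProduct_neg,
        dotProduct_smul, star_trivial, RCLike.re_to_real, smul_eq_mul] at this
      linarith
    have h3 : v ⬝ᵥ ((Aᵀ * P).mulVec v) = v ⬝ᵥ P.mulVec (A.mulVec v) := by
      rw [← Matrix.mulVec_mulVec, Matrix.dotProduct_mulVec v Aᵀ,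
        Matrix.vecMul_transpose]
      rw [Matrix.dotProduct_mulVec v P, ← hPsymm, Matrix.vecMul_transpose,
        dotProduct_comm]
      rw [hPsymm]
    have h4 : v ⬝ᵥ ((Aᵀ * P + P * A).mulVec v)
        = 2 * (v ⬝ᵥ P.mulVec (A.mulVec v)) := by
      rw [Matrix.add_mulVec, dotProduct_add, h3, ← Matrix.mulVec_mulVec]
      ring
    nlinarith [mul_pos heps hvv]
  -- mean value theorem
  have hcont : ContinuousOn g (Set.Icc 0 1) :=
    fun t _ => ((hg t).continuousAt).continuousWithinAt
  have hderiv : ∀ t ∈ Set.Ioo (0:ℝ) 1, HasDerivAt g (v ⬝ᵥ P.mulVec ((J (y + t • v)).mulVec v)) t :=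
    fun t _ => hg t
  obtain ⟨c, hc, hceq⟩ := exists_hasDerivAt_eq_slope g
    (fun t => v ⬝ᵥ P.mulVec ((J (y + t • v)).mulVec v)) (by norm_num) hcont hderiv
  have hgeq : g 1 = g 0 := by
    simp only [g, one_smul, zero_smul, add_zero]
    have : y + v = x := by rw [hvdef]; abel
    rw [this, hxy]
  rw [hgeq] at hceq
  simp at hceq
  have hb := hbound c
  rw [Matrix.mulVec_mulVec] at hb
  exact absurd hceq hb.ne
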